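/- arXiv:1007.3653 — 7 statements merged into one kernel-verified Lean document; each statement's English description precedes it below -/
import Mathlib

section
/- Let f, g be real analytic near 0 with g(0) = 0, g'(0) = 1, and x·g(x) > 0 for x ≠ 0 in a punctured neighborhood of 0. Define F(x) = ∫₀ˣ f(s) ds. Then the function x ↦ 2∫₀ˣ g(s) e^{2F(s)} ds is nonnegative near 0, vanishes only at 0, and its square root ξ(x), chosen with x·ξ(x) > 0 for x ≠ 0, satisfies ξ(0)=0 and ξ'(0) = 1. -/
open Filter Set intervalIntegral MeasureTheory

private lemma abs_le_of_mem_uIcc {s x : ℝ} (hs : s ∈ Set.uIcc 0 x) : |s| ≤ |x| := by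
  rcases Set.mem_uIcc.mp hs with ⟨h1, h2⟩ | ⟨h1, h2⟩ <;>
    rw [abs_le] <;> constructor <;> nlinarith [le_abs_self x, neg_abs_le x]

/-- with `g 0 = 0`, `g' 0 = 1`, `x * g x > 0` on a punctured neighborhood of `0`,
the function `G x = 2 ∫₀ˣ g s * exp (2 F s) ds` is nonnegative near `0`, vanishes only at `0`,
and its square root `ξ` chosen with `x * ξ x > 0` for `x ≠ 0` satisfies `ξ 0 = 0`, `ξ' 0 = 1`. -/
theorem stmt1 (f g F G : ℝ → ℝ) (hf : AnalyticAt ℝ f 0) (hg : AnalyticAt ℝ g 0)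
    (hg0 : g 0 = 0) (hg1 : deriv g 0 = 1)
    (hsign : ∀ᶠ x in nhdsWithin 0 {(0:ℝ)}ᶜ, x * g x > 0)
    (hF : ∀ x, F x = ∫ s in (0:ℝ)..x, f s)
    (hG : ∀ x, G x = 2 * ∫ s in (0:ℝ)..x, g s * Real.exp (2 * F s)) :
    (∀ᶠ x in nhds 0, 0 ≤ G x) ∧
    (∀ᶠ x in nhds 0, G x = 0 → x = 0) ∧
    ∃ ξ : ℝ → ℝ, (∀ᶠ x in nhds 0, ξ x ^ 2 = G x) ∧
      (∀ᶠ x in nhdsWithin 0 {(0:ℝ)}ᶜ, x * ξ x > 0) ∧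
      ξ 0 = 0 ∧ deriv ξ 0 = 1 := by
  -- choose a ball on which everything is nice
  have hsign' : ∀ᶠ x in nhds 0, x ≠ 0 → x * g x > 0 := by
    simpa [eventually_nhdsWithin_iff] using hsign
  obtain ⟨δ, hδ, hball⟩ := Metric.eventually_nhds_iff.mp
    ((hg.eventually_analyticAt.and hf.eventually_analyticAt).and hsign')
  have hmem : ∀ {y : ℝ}, |y| < δ → (AnalyticAt ℝ g y ∧ AnalyticAt ℝ f y) ∧ (y ≠ 0 → y * g y > 0) :=
    fun {y} hy => hball (by simpa [Real.dist_eq] using hy)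
  have hgc : ∀ {y : ℝ}, |y| < δ → ContinuousAt g y := fun hy => (hmem hy).1.1.continuousAt
  have hfc : ∀ {y : ℝ}, |y| < δ → ContinuousAt f y := fun hy => (hmem hy).1.2.continuousAt
  have hsgn : ∀ {y : ℝ}, |y| < δ → y ≠ 0 → y * g y > 0 := fun hy => (hmem hy).2
  have hopen : IsOpen (Metric.ball (0:ℝ) δ) := Metric.isOpen_ball
  have hballmem : ∀ {y : ℝ}, |y| < δ → y ∈ Metric.ball (0:ℝ) δ := by
    intro y hy; simpa [Metric.mem_ball, Real.dist_eq] using hy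
  -- integrability of f on subintervals
  have hfi : ∀ {x : ℝ}, |x| < δ → IntervalIntegrable f volume 0 x := by
    intro x hx
    apply ContinuousOn.intervalIntegrable
    intro s hs
    exact (hfc (lt_of_le_of_lt (abs_le_of_mem_uIcc hs) hx)).continuousWithinAt
  -- F has derivative f y at every y in the ball
  have hFd : ∀ {y : ℝ}, |y| < δ → HasDerivAt F (f y) y := by
    intro y hy
    have : HasDerivAt (fun u => ∫ s in (0:ℝ)..u, f s) (f y) y :=
      intervalIntegral.integral_hasDerivAt_right (hfi hy)
        (ContinuousAt.stronglyMeasurableAtFilter hopen (fun z hz => hfc (by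
          simpa [Metric.mem_ball, Real.dist_eq] using hz)) y (hballmem hy))
        (hfc hy)
    exact (funext hF : F = _) ▸ this
  have hF0 : F 0 = 0 := by simp [hF 0]
  -- the integrand h and its basic properties
  set h : ℝ → ℝ := fun s => g s * Real.exp (2 * F s) with hh
  have hhc : ∀ {y : ℝ}, |y| < δ → ContinuousAt h y := by
    intro y hy
    exact (hgc hy).mul (Real.continuous_exp.continuousAt.comp
      ((continuousAt_const.mul (hFd hy).continuousAt)))
  have hhi : ∀ {x : ℝ}, |x| < δ → IntervalIntegrable h volume 0 x := by
    intro x hx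
    apply ContinuousOn.intervalIntegrable
    intro s hs
    exact (hhc (lt_of_le_of_lt (abs_le_of_mem_uIcc hs) hx)).continuousWithinAt
  have hGh : ∀ x, G x = 2 * ∫ s in (0:ℝ)..x, h s := hG
  have hG0 : G 0 = 0 := by simp [hG 0]
  -- positivity of h away from 0
  have hhpos : ∀ {s : ℝ}, |s| < δ → 0 < s → 0 < h s := by
    intro s hsδ hs
    have := hsgn hsδ hs.ne'
    have hgs : 0 < g s := by
      rcases mul_pos_iff.mp this with ⟨_, h⟩ | ⟨h', _⟩
      · exact h
      · linarith
    exact mul_pos hgs (Real.exp_pos _)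
  have hhneg : ∀ {s : ℝ}, |s| < δ → s < 0 → h s < 0 := by
    intro s hsδ hs
    have := hsgn hsδ hs.ne
    have hgs : g s < 0 := by nlinarith
    exact mul_neg_of_neg_of_pos hgs (Real.exp_pos _)
  -- G positive away from 0
  have hGpos : ∀ {x : ℝ}, |x| < δ → x ≠ 0 → 0 < G x := by
    intro x hx hx0
    rw [hGh]
    rcases hx0.lt_or_gt with hneg | hpos
    · have : 0 < ∫ s in x..(0:ℝ), -h s := by
        apply intervalIntegral_pos_of_pos_on ((hhi hx).symm.neg)
        · intro s hs
          have hsδ : |s| < δ := by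
            rcases hs with ⟨h1, h2⟩
            rw [abs_lt]; constructor <;> nlinarith [abs_lt.mp hx]
          simpa using hhneg hsδ hs.2
        · exact hneg
      rw [intervalIntegral.integral_neg, intervalIntegral.integral_symm] at this
      nlinarith
    · have : 0 < ∫ s in (0:ℝ)..x, h s := by
        apply intervalIntegral_pos_of_pos_on (hhi hx)
        · intro s hs
          have hsδ : |s| < δ := by
            rcases hs with ⟨h1, h2⟩
            rw [abs_lt]; constructor <;> nlinarith [abs_lt.mp hx]
          exact hhpos hsδ hs.1
        · exact hpos
      nlinarith
  have hGnn : ∀ {x : ℝ}, |x| < δ → 0 ≤ G x := by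
    intro x hx
    rcases eq_or_ne x 0 with rfl | hx0
    · simp [hG0]
    · exact (hGpos hx hx0).le
  have hballev : ∀ᶠ x in nhds (0:ℝ), |x| < δ := by
    have : Metric.ball (0:ℝ) δ ∈ nhds (0:ℝ) := Metric.ball_mem_nhds _ hδ
    filter_upwards [this] with x hx
    simpa [Metric.mem_ball, Real.dist_eq] using hx
  refine ⟨?_, ?_, ?_⟩
  · filter_upwards [hballev] with x hx using hGnn hx
  · filter_upwards [hballev] with x hx hx0
    by_contra hne
    exact absurd hx0 (hGpos hx hne).ne'
  -- the square root
  set ξ : ℝ → ℝ := fun x => Real.sign x * Real.sqrt (G x) with hξ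
  have hξ0 : ξ 0 = 0 := by simp [hξ, Real.sign_zero]
  have hξsq : ∀ᶠ x in nhds 0, ξ x ^ 2 = G x := by
    filter_upwards [hballev] with x hx
    rcases eq_or_ne x 0 with rfl | hx0
    · simp [hξ, Real.sign_zero, hG0]
    · have hs : Real.sign x ^ 2 = 1 := by
        rcases Real.sign_apply_eq_of_ne_zero x hx0 with h | h <;> rw [h] <;> ring
      rw [hξ]
      simp only []
      rw [mul_pow, hs, one_mul, Real.sq_sqrt (hGnn hx)]
  have hξsgn : ∀ᶠ x in nhdsWithin 0 {(0:ℝ)}ᶜ, x * ξ x > 0 := by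
    rw [eventually_nhdsWithin_iff]
    filter_upwards [hballev] with x hx hx0
    have hx0' : x ≠ 0 := hx0
    have h1 : 0 < Real.sqrt (G x) := Real.sqrt_pos.mpr (hGpos hx hx0')
    have h2 : 0 < x * Real.sign x := by
      rcases hx0'.lt_or_gt with h | h
      · rw [Real.sign_of_neg h]; nlinarith
      · rw [Real.sign_of_pos h]; nlinarith
    calc (0:ℝ) < (x * Real.sign x) * Real.sqrt (G x) := mul_pos h2 h1
    _ = x * ξ x := by rw [hξ]; ring
  -- derivative of h at 0 is 1
  have hgd : HasDerivAt g 1 0 := hg1 ▸ hg.differentiableAt.hasDerivAt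
  have hed : HasDerivAt (fun s => Real.exp (2 * F s)) (Real.exp (2 * F 0) * (2 * f 0)) 0 :=
    ((hFd (by simpa using hδ)).const_mul 2).exp
  have hhd : HasDerivAt h 1 0 := by
    have := hgd.fun_mul hed
    simpa [hh, hg0, hF0] using this
  have hh0 : h 0 = 0 := by simp [hh, hg0]
  -- key limit : G x / x ^ 2 → 1
  have hkey : Tendsto (fun x => G x / x ^ 2) (nhdsWithin 0 {(0:ℝ)}ᶜ) (nhds 1) := by
    rw [Metric.tendsto_nhds]
    intro ε hε
    have hlo := (hasDerivAt_iff_isLittleO.mp hhd).def (show (0:ℝ) < ε/4 by linarith)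
    obtain ⟨δ₂, hδ₂, hbdall⟩ := Metric.eventually_nhds_iff.mp hlo
    rw [eventually_nhdsWithin_iff]
    have hev2 : ∀ᶠ x in nhds (0:ℝ), |x| < min δ δ₂ := by
      have hb : Metric.ball (0:ℝ) (min δ δ₂) ∈ nhds (0:ℝ) := Metric.ball_mem_nhds _ (lt_min hδ hδ₂)
      filter_upwards [hb] with x hx
      simpa [Metric.mem_ball, Real.dist_eq] using hx
    filter_upwards [hev2] with x hx hx0
    have hxδ : |x| < δ := lt_of_lt_of_le hx (min_le_left _ _)
    have hxδ₂ : |x| < δ₂ := lt_of_lt_of_le hx (min_le_right _ _)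
    have hx0' : x ≠ 0 := hx0
    -- bound |∫₀ˣ (h s - s)| ≤ (ε/4)*|x| * |x|
    have hids : IntervalIntegrable (fun s : ℝ => s) volume 0 x :=
      (continuous_id).intervalIntegrable 0 x
    have hbd : ∀ s ∈ Set.uIoc (0:ℝ) x, ‖h s - s‖ ≤ ε/4 * |x| := by
      intro s hs
      have hsx : |s| ≤ |x| := abs_le_of_mem_uIcc (Set.uIoc_subset_uIcc hs)
      have hsδ₂ : dist s 0 < δ₂ := by
        rw [Real.dist_eq, sub_zero]; exact lt_of_le_of_lt hsx hxδ₂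
      have := hbdall hsδ₂
      simp only [hh0, sub_zero, smul_eq_mul, mul_one, Real.norm_eq_abs] at this
      calc |h s - s| ≤ ε/4 * |s| := this
      _ ≤ ε/4 * |x| := by nlinarith
    have hnorm : ‖∫ s in (0:ℝ)..x, (h s - s)‖ ≤ ε/4 * |x| * |x - 0| :=
      intervalIntegral.norm_integral_le_of_norm_le_const hbd
    have hint : (∫ s in (0:ℝ)..x, (h s - s)) = (∫ s in (0:ℝ)..x, h s) - x^2/2 := by
      rw [intervalIntegral.integral_sub (hhi hxδ) hids, integral_id]
      norm_num
    have hGdiff : |G x - x^2| ≤ ε/2 * x^2 := by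
      have : G x - x^2 = 2 * ∫ s in (0:ℝ)..x, (h s - s) := by
        rw [hint, hGh]; ring
      rw [this, abs_mul]
      have : |x - 0| = |x| := by simp
      rw [this] at hnorm
      have h2 : |x| * |x| = x^2 := by rw [← abs_mul, ← sq, abs_sq]
      calc |(2:ℝ)| * |∫ s in (0:ℝ)..x, (h s - s)| ≤ 2 * (ε/4 * |x| * |x|) := by
            rw [abs_two]
            exact mul_le_mul_of_nonneg_left (by simpa using hnorm) (by norm_num)
      _ = ε/2 * x^2 := by rw [mul_assoc, h2]; ring
    have hx2 : (0:ℝ) < x^2 := by positivity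
    rw [Real.dist_eq]
    have : G x / x^2 - 1 = (G x - x^2) / x^2 := by field_simp
    rw [this, abs_div, abs_of_pos hx2, div_lt_iff₀ hx2]
    calc |G x - x^2| ≤ ε/2 * x^2 := hGdiff
    _ < ε * x^2 := by nlinarith
  -- slope of ξ at 0 tends to 1
  have hslope : Tendsto (fun x => ξ x / x) (nhdsWithin 0 {(0:ℝ)}ᶜ) (nhds 1) := by
    have hs : Tendsto (fun x => Real.sqrt (G x / x ^ 2)) (nhdsWithin 0 {(0:ℝ)}ᶜ) (nhds 1) := by
      have := (Real.continuous_sqrt.continuousAt (x := (1:ℝ))).tendsto.comp hkey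
      simpa [Function.comp_def] using this
    apply hs.congr'
    have hballev' : ∀ᶠ x in nhdsWithin (0:ℝ) {(0:ℝ)}ᶜ, |x| < δ :=
      eventually_nhdsWithin_of_eventually_nhds hballev
    filter_upwards [hballev', self_mem_nhdsWithin] with x hxδ hx0
    have hx0' : (x : ℝ) ≠ 0 := hx0
    have hGx : 0 ≤ G x := hGnn hxδ
    have hq : Real.sqrt (G x / x ^ 2) = Real.sqrt (G x) / |x| := by
      rw [Real.sqrt_div hGx, Real.sqrt_sq_eq_abs]
    rw [hq]
    show Real.sqrt (G x) / |x| = Real.sign x * Real.sqrt (G x) / x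
    rcases hx0'.lt_or_gt with hneg | hpos
    · rw [Real.sign_of_neg hneg, abs_of_neg hneg, neg_one_mul, div_neg, neg_div]
    · rw [Real.sign_of_pos hpos, abs_of_pos hpos, one_mul]
  have hder : HasDerivAt ξ 1 0 := by
    rw [hasDerivAt_iff_tendsto_slope]
    apply hslope.congr'
    filter_upwards [self_mem_nhdsWithin] with x hx0
    rw [slope_def_field, hξ0]
    simp
  exact ⟨ξ, hξsq, hξsgn, hξ0, hder.deriv⟩
end

section
/- With F, φ, ξ as above (g(0)=0, g'(0)=1, xg(x)>0 for x≠0) and h an odd real analytic function near 0 with 1 + h(ξ(x)) ≠ 0 near 0, the condition ξ(x)/(1 + h(ξ(x))) = g(x)e^{F(x)} for all x near 0 holds if and only if φ(x) = ξ(x) + ∫₀^{ξ(x)} h(t) dt for all x near 0. -/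
open Set Filter MeasureTheory intervalIntegral

lemma ftc_aux {a : ℝ → ℝ} {r : ℝ} (hr : 0 < r)
    (hc : ∀ y ∈ Set.Ioo (-r) r, ContinuousAt a y) {x : ℝ} (hx : x ∈ Set.Ioo (-r) r) :
    HasDerivAt (fun u => ∫ t in (0:ℝ)..u, a t) (a x) x := by
  have h0 : (0:ℝ) ∈ Set.Ioo (-r) r := ⟨by linarith, hr⟩
  have hco : ContinuousOn a (Set.Ioo (-r) r) := fun y hy => (hc y hy).continuousWithinAt
  have hsub : Set.uIcc (0:ℝ) x ⊆ Set.Ioo (-r) r := (Set.ordConnected_Ioo).uIcc_subset h0 hx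
  have hint : IntervalIntegrable a MeasureTheory.volume 0 x :=
    (hco.mono hsub).intervalIntegrable
  exact intervalIntegral.integral_hasDerivAt_right hint
    (ContinuousOn.stronglyMeasurableAtFilter isOpen_Ioo hco x hx) (hc x hx)

lemma zero_on_Ioi {ψ : ℝ → ℝ} {r : ℝ} (hr : 0 < r) (h0 : ψ 0 = 0)
    (hc : ContinuousAt ψ 0) (hd : ∀ x ∈ Set.Ioo (0:ℝ) r, HasDerivAt ψ 0 x) :
    ∀ x ∈ Set.Ioo (0:ℝ) r, ψ x = 0 := by
  have hdiff : DifferentiableOn ℝ ψ (Set.Ioo 0 r) := fun y hy =>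
    ((hd y hy).differentiableAt).differentiableWithinAt
  have hfd : ∀ y ∈ Set.Ioo (0:ℝ) r, fderivWithin ℝ ψ (Set.Ioo 0 r) y = 0 := by
    intro y hy
    rw [fderivWithin_of_isOpen isOpen_Ioo hy, (hd y hy).hasFDerivAt.fderiv]
    ext
    simp
  intro x hx
  have hconst : ∀ y ∈ Set.Ioo (0:ℝ) r, ψ y = ψ x := fun y hy =>
    (convex_Ioo 0 r).is_const_of_fderivWithin_eq_zero hdiff hfd hy hx
  have hmem : Set.Ioo (0:ℝ) r ∈ nhdsWithin (0:ℝ) (Set.Ioi 0) :=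
    Ioo_mem_nhdsGT_of_mem ⟨le_refl 0, hr⟩
  have h1 : Filter.Tendsto ψ (nhdsWithin (0:ℝ) (Set.Ioi 0)) (nhds 0) := by
    have := hc.tendsto; rw [h0] at this; exact this.mono_left nhdsWithin_le_nhds
  have h2 : Filter.Tendsto ψ (nhdsWithin (0:ℝ) (Set.Ioi 0)) (nhds (ψ x)) := by
    refine Filter.Tendsto.congr' ?_ tendsto_const_nhds
    exact Filter.eventually_of_mem hmem (fun y hy => (hconst y hy).symm)
  exact tendsto_nhds_unique h2 h1

lemma zero_on_Ioo {ψ : ℝ → ℝ} {r : ℝ} (hr : 0 < r) (h0 : ψ 0 = 0)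
    (hc : ContinuousAt ψ 0)
    (hd : ∀ x ∈ Set.Ioo (-r) r, x ≠ 0 → HasDerivAt ψ 0 x) :
    ∀ x ∈ Set.Ioo (-r) r, ψ x = 0 := by
  intro x hx
  rcases lt_trichotomy x 0 with hx0 | rfl | hx0
  · have hcont : ContinuousAt (fun y : ℝ => ψ (-y)) 0 := by
      have hneg : ContinuousAt (fun y : ℝ => -y) 0 := continuous_neg.continuousAt
      have : ContinuousAt ψ (-(0:ℝ)) := by simpa using hc
      exact this.comp hneg
    have hder : ∀ y ∈ Set.Ioo (0:ℝ) r, HasDerivAt (fun y : ℝ => ψ (-y)) 0 y := by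
      intro y hy
      have hmem : -y ∈ Set.Ioo (-r) r := ⟨by linarith [hy.2], by linarith [hy.1]⟩
      have := (hd (-y) hmem (by intro hcon; simp at hcon; exact absurd hcon (ne_of_gt hy.1))).comp y
        (hasDerivAt_neg y)
      rw [zero_mul] at this
      exact this
    have := zero_on_Ioi hr (by simpa using h0) hcont hder (-x)
      ⟨by linarith, by linarith [hx.1]⟩
    simpa using this
  · exact h0
  · exact zero_on_Ioi hr h0 hc
      (fun y hy => hd y ⟨by linarith [hy.1], hy.2⟩ (ne_of_gt hy.1)) x ⟨hx0, hx.2⟩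

set_option maxHeartbeats 2000000 in
/-- equivalence of the two isochronicity conditions (1.5) and (1.6):
`ξ x / (1 + h (ξ x)) = g x * exp (F x)` near `0` iff `φ x = ξ x + ∫₀^{ξ x} h` near `0`. -/
theorem stmt2 (f g F φ ξ h : ℝ → ℝ)
    (hf : AnalyticAt ℝ f 0) (hg : AnalyticAt ℝ g 0)
    (hg0 : g 0 = 0) (hg1 : deriv g 0 = 1)
    (hsign : ∀ᶠ x in nhdsWithin 0 {(0:ℝ)}ᶜ, x * g x > 0)
    (hF : ∀ x, F x = ∫ s in (0:ℝ)..x, f s)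
    (hφ : ∀ x, φ x = ∫ s in (0:ℝ)..x, Real.exp (F s))
    (hξsq : ∀ x, ξ x ^ 2 = 2 * ∫ s in (0:ℝ)..x, g s * Real.exp (2 * F s))
    (hξsign : ∀ᶠ x in nhdsWithin 0 {(0:ℝ)}ᶜ, x * ξ x > 0)
    (hh : AnalyticAt ℝ h 0) (hodd : ∀ t, h (-t) = - h t)
    (hne : ∀ᶠ x in nhds 0, 1 + h (ξ x) ≠ 0) :
    (∀ᶠ x in nhds 0, ξ x / (1 + h (ξ x)) = g x * Real.exp (F x)) ↔
    (∀ᶠ x in nhds 0, φ x = ξ x + ∫ t in (0:ℝ)..(ξ x), h t) := by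
  have hFe : F = fun u => ∫ s in (0:ℝ)..u, f s := funext hF
  have hφe : φ = fun u => ∫ s in (0:ℝ)..u, Real.exp (F s) := funext hφ
  set H : ℝ → ℝ := fun u => ∫ t in (0:ℝ)..u, h t with hHdef
  set Q : ℝ → ℝ := fun u => ∫ s in (0:ℝ)..u, g s * Real.exp (2 * F s) with hQdef
  -- continuity radii
  have hfc : ∀ᶠ y in nhds (0:ℝ), ContinuousAt f y :=
    hf.eventually_analyticAt.mono (fun y hy => hy.continuousAt)
  have hgc : ∀ᶠ y in nhds (0:ℝ), ContinuousAt g y :=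
    hg.eventually_analyticAt.mono (fun y hy => hy.continuousAt)
  obtain ⟨r₁, hr₁, hr₁P⟩ : ∃ r₁ > 0, ∀ y ∈ Set.Ioo (-r₁) r₁, ContinuousAt f y ∧ ContinuousAt g y := by
    rcases Metric.eventually_nhds_iff.mp (hfc.and hgc) with ⟨ε, hε, hP⟩
    exact ⟨ε, hε, fun y hy => hP (by rw [Real.dist_eq, sub_zero]; exact abs_lt.mpr ⟨hy.1, hy.2⟩)⟩
  have h0r₁ : (0:ℝ) ∈ Set.Ioo (-r₁) r₁ := ⟨by linarith, hr₁⟩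
  have hFd : ∀ y ∈ Set.Ioo (-r₁) r₁, HasDerivAt F (f y) y := by
    intro y hy; rw [hFe]; exact ftc_aux hr₁ (fun z hz => (hr₁P z hz).1) hy
  have hFc : ∀ y ∈ Set.Ioo (-r₁) r₁, ContinuousAt F y := fun y hy => (hFd y hy).continuousAt
  have hQic : ∀ y ∈ Set.Ioo (-r₁) r₁, ContinuousAt (fun s => g s * Real.exp (2 * F s)) y := by
    intro y hy
    exact ((hr₁P y hy).2).mul
      (Real.continuous_exp.continuousAt.comp (continuousAt_const.mul (hFc y hy)))
  have hQd : ∀ y ∈ Set.Ioo (-r₁) r₁, HasDerivAt Q (g y * Real.exp (2 * F y)) y :=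
    fun y hy => ftc_aux hr₁ hQic hy
  have hφd : ∀ y ∈ Set.Ioo (-r₁) r₁, HasDerivAt φ (Real.exp (F y)) y := by
    intro y hy; rw [hφe]
    exact ftc_aux hr₁ (fun z hz => Real.continuous_exp.continuousAt.comp (hFc z hz)) hy
  have hξ0 : ξ 0 = 0 := by
    have h1 := hξsq 0
    rw [intervalIntegral.integral_same, mul_zero] at h1
    exact pow_eq_zero_iff (two_ne_zero) |>.mp h1
  have hQ0 : Q 0 = 0 := intervalIntegral.integral_same
  have habs : ∀ y, |ξ y| = Real.sqrt (2 * Q y) := by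
    intro y
    rw [← Real.sqrt_sq_eq_abs, hξsq y]
  have hξcont : ContinuousAt ξ 0 := by
    have hQcont : ContinuousAt Q 0 := (hQd 0 h0r₁).continuousAt
    have h2 : Filter.Tendsto (fun y => 2 * Q y) (nhds 0) (nhds 0) := by
      have h2' := hQcont.tendsto.const_mul (2:ℝ)
      rwa [hQ0, mul_zero] at h2'
    have h1 : Filter.Tendsto (fun y => Real.sqrt (2 * Q y)) (nhds 0) (nhds 0) := by
      have h1' := (Real.continuous_sqrt.tendsto 0).comp h2
      rw [Real.sqrt_zero] at h1'
      exact h1'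
    have h3 : Filter.Tendsto (fun y => |ξ y|) (nhds 0) (nhds 0) := by
      simpa only [habs] using h1
    unfold ContinuousAt
    rw [hξ0]
    exact (tendsto_zero_iff_abs_tendsto_zero ξ).mpr h3
  obtain ⟨ρ, hρ, hρP⟩ : ∃ ρ > 0, ∀ t ∈ Set.Ioo (-ρ) ρ, ContinuousAt h t := by
    rcases Metric.eventually_nhds_iff.mp
      (hh.eventually_analyticAt.mono (fun y hy => hy.continuousAt)) with ⟨ε, hε, hP⟩
    exact ⟨ε, hε, fun y hy => hP (by rw [Real.dist_eq, sub_zero]; exact abs_lt.mpr ⟨hy.1, hy.2⟩)⟩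
  have hHd : ∀ t ∈ Set.Ioo (-ρ) ρ, HasDerivAt H (h t) t := fun t ht => ftc_aux hρ hρP ht
  -- master radius
  have hev1 : ∀ᶠ y in nhds (0:ℝ), ξ y ∈ Set.Ioo (-ρ) ρ := by
    have := hξcont.tendsto
    rw [hξ0] at this
    exact this (Ioo_mem_nhds (by linarith) hρ)
  have hev2 : ∀ᶠ y in nhds (0:ℝ), y ≠ 0 → y * ξ y > 0 := by
    have := eventually_nhdsWithin_iff.mp hξsign
    exact this.mono (fun y hy hy0 => hy (by simpa using hy0))
  have hball : ∀ᶠ y in nhds (0:ℝ), y ∈ Set.Ioo (-r₁) r₁ :=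
    Filter.eventually_of_mem (Ioo_mem_nhds (by linarith) hr₁) (fun y hy => hy)
  obtain ⟨r, hr, hrP⟩ : ∃ r > 0, ∀ y, |y| < r →
      (ξ y ∈ Set.Ioo (-ρ) ρ ∧ (1 + h (ξ y) ≠ 0) ∧ y ∈ Set.Ioo (-r₁) r₁) ∧
        (y ≠ 0 → y * ξ y > 0) := by
    rcases Metric.eventually_nhds_iff.mp ((hev1.and (hne.and hball)).and hev2) with ⟨ε, hε, hP⟩
    exact ⟨ε, hε, fun y hy => hP (by rw [Real.dist_eq, sub_zero]; exact hy)⟩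
  have hB : ∀ y ∈ Set.Ioo (-r) r,
      (ξ y ∈ Set.Ioo (-ρ) ρ ∧ (1 + h (ξ y) ≠ 0) ∧ y ∈ Set.Ioo (-r₁) r₁) ∧
        (y ≠ 0 → y * ξ y > 0) :=
    fun y hy => hrP y (abs_lt.mpr ⟨hy.1, hy.2⟩)
  have hξne : ∀ y ∈ Set.Ioo (-r) r, y ≠ 0 → ξ y ≠ 0 := by
    intro y hy hy0 hz
    have := (hB y hy).2 hy0
    rw [hz, mul_zero] at this
    exact lt_irrefl 0 this
  -- derivative of ξ off 0
  have hξd : ∀ x ∈ Set.Ioo (-r) r, x ≠ 0 →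
      HasDerivAt ξ (g x * Real.exp (2 * F x) / ξ x) x := by
    intro x hx hx0
    have hxr₁ : x ∈ Set.Ioo (-r₁) r₁ := (hB x hx).1.2.2
    have h2Q : HasDerivAt (fun y => 2 * Q y) (2 * (g x * Real.exp (2 * F x))) x :=
      (hQd x hxr₁).const_mul 2
    have hQpos : 0 < 2 * Q x := by
      have h1 : ξ x ^ 2 = 2 * Q x := hξsq x
      have h2 : (0:ℝ) < ξ x ^ 2 := pow_two_pos_of_ne_zero (hξne x hx hx0)
      linarith
    have hQne : 2 * Q x ≠ 0 := ne_of_gt hQpos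
    have hs : HasDerivAt (fun y => Real.sqrt (2 * Q y))
        (2 * (g x * Real.exp (2 * F x)) / (2 * Real.sqrt (2 * Q x))) x := h2Q.sqrt hQne
    have hsq : 0 < Real.sqrt (2 * Q x) := Real.sqrt_pos.mpr hQpos
    rcases lt_or_gt_of_ne hx0 with hneg | hpos
    · have hevq : ξ =ᶠ[nhds x] fun y => -Real.sqrt (2 * Q y) := by
        refine Filter.eventually_of_mem (Ioo_mem_nhds hx.1 hneg) (fun y hy => ?_)
        have hyB : y ∈ Set.Ioo (-r) r := ⟨hy.1, by linarith [hy.2, hr]⟩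
        have hyneg : ξ y < 0 := by
          have h3 := (hB y hyB).2 (ne_of_lt hy.2)
          nlinarith [hy.2]
        have h4 := habs y
        rw [abs_of_neg hyneg] at h4
        show ξ y = -Real.sqrt (2 * Q y)
        linarith
      have hfin := hs.neg.congr_of_eventuallyEq hevq
      refine hfin.congr_deriv ?_
      have hξx : ξ x = -Real.sqrt (2 * Q x) := hevq.self_of_nhds
      rw [hξx, div_neg, mul_div_mul_left _ _ two_ne_zero]
    · have hevq : ξ =ᶠ[nhds x] fun y => Real.sqrt (2 * Q y) := by
        refine Filter.eventually_of_mem (Ioo_mem_nhds hpos hx.2) (fun y hy => ?_)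
        have hyB : y ∈ Set.Ioo (-r) r := ⟨by linarith [hy.1, hr], hy.2⟩
        have hypos : 0 < ξ y := by
          have h3 := (hB y hyB).2 (ne_of_gt hy.1)
          nlinarith [hy.1]
        have h4 := habs y
        rw [abs_of_pos hypos] at h4
        show ξ y = Real.sqrt (2 * Q y)
        linarith
      have hfin := hs.congr_of_eventuallyEq hevq
      refine hfin.congr_deriv ?_
      have hξx : ξ x = Real.sqrt (2 * Q x) := hevq.self_of_nhds
      rw [hξx, mul_div_mul_left _ _ two_ne_zero]
  -- derivative of Φ := ξ + H ∘ ξ off 0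
  have hΦd : ∀ x ∈ Set.Ioo (-r) r, x ≠ 0 →
      HasDerivAt (fun y => ξ y + H (ξ y))
        ((1 + h (ξ x)) * (g x * Real.exp (2 * F x) / ξ x)) x := by
    intro x hx hx0
    have hξx := hξd x hx hx0
    have hHx : HasDerivAt H (h (ξ x)) (ξ x) := hHd (ξ x) (hB x hx).1.1
    have hc := hHx.comp x hξx
    have := hξx.add hc
    refine this.congr_deriv ?_
    ring
  have hΦc : ContinuousAt (fun y => ξ y + H (ξ y)) 0 := by
    have hH0 : ContinuousAt H (ξ 0) := by
      rw [hξ0]; exact (hHd 0 ⟨by linarith, hρ⟩).continuousAt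
    exact hξcont.add (hH0.comp hξcont)
  have hexp2 : ∀ x, Real.exp (2 * F x) = Real.exp (F x) * Real.exp (F x) := by
    intro x; rw [← Real.exp_add]; ring_nf
  constructor
  · intro hyp
    obtain ⟨U, hU, hUo, hU0⟩ := eventually_nhds_iff.mp hyp
    obtain ⟨r₂, hr₂, hr₂P⟩ : ∃ r₂ > 0, Set.Ioo (-r₂) r₂ ⊆ U ∩ Set.Ioo (-r) r := by
      have hm : U ∩ Set.Ioo (-r) r ∈ nhds (0:ℝ) :=
        Filter.inter_mem (hUo.mem_nhds hU0) (Ioo_mem_nhds (by linarith) hr)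
      rcases Metric.mem_nhds_iff.mp hm with ⟨ε, hε, hsub⟩
      exact ⟨ε, hε, fun y hy => hsub
        (by rw [Metric.mem_ball, Real.dist_eq, sub_zero]; exact abs_lt.mpr ⟨hy.1, hy.2⟩)⟩
    set ψ : ℝ → ℝ := fun y => φ y - (ξ y + H (ξ y)) with hψdef
    have hψ0 : ψ 0 = 0 := by
      show φ 0 - (ξ 0 + H (ξ 0)) = 0
      rw [hφ 0, hξ0, intervalIntegral.integral_same]
      show (0:ℝ) - (0 + ∫ t in (0:ℝ)..(0:ℝ), h t) = 0
      rw [intervalIntegral.integral_same]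
      ring
    have hψc : ContinuousAt ψ 0 := ((hφd 0 h0r₁).continuousAt).sub hΦc
    have hψd : ∀ x ∈ Set.Ioo (-r₂) r₂, x ≠ 0 → HasDerivAt ψ 0 x := by
      intro x hx hx0
      have hxB : x ∈ Set.Ioo (-r) r := (hr₂P hx).2
      have hxU : x ∈ U := (hr₂P hx).1
      have h1 := hφd x (hB x hxB).1.2.2
      have h2 := hΦd x hxB hx0
      have hyp' := hU x hxU
      have hne' : 1 + h (ξ x) ≠ 0 := (hB x hxB).1.2.1
      have hξne' : ξ x ≠ 0 := hξne x hxB hx0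
      have hval : (1 + h (ξ x)) * (g x * Real.exp (2 * F x) / ξ x) = Real.exp (F x) := by
        rw [hexp2 x]
        field_simp at hyp' ⊢
        linear_combination -hyp'
      rw [hval] at h2
      have h3 := h1.sub h2
      rw [sub_self] at h3
      exact h3
    have hzero := zero_on_Ioo hr₂ hψ0 hψc hψd
    refine Filter.eventually_of_mem (Ioo_mem_nhds (neg_lt_zero.mpr hr₂) hr₂) (fun x hx => ?_)
    have h5 : φ x - (ξ x + H (ξ x)) = 0 := hzero x hx
    linarith
  · intro hyp
    obtain ⟨U, hU, hUo, hU0⟩ := eventually_nhds_iff.mp hyp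
    obtain ⟨r₂, hr₂, hr₂P⟩ : ∃ r₂ > 0, Set.Ioo (-r₂) r₂ ⊆ U ∩ Set.Ioo (-r) r := by
      have hm : U ∩ Set.Ioo (-r) r ∈ nhds (0:ℝ) :=
        Filter.inter_mem (hUo.mem_nhds hU0) (Ioo_mem_nhds (by linarith) hr)
      rcases Metric.mem_nhds_iff.mp hm with ⟨ε, hε, hsub⟩
      exact ⟨ε, hε, fun y hy => hsub
        (by rw [Metric.mem_ball, Real.dist_eq, sub_zero]; exact abs_lt.mpr ⟨hy.1, hy.2⟩)⟩
    refine Filter.eventually_of_mem (Ioo_mem_nhds (neg_lt_zero.mpr hr₂) hr₂) (fun x hx => ?_)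
    rcases eq_or_ne x 0 with rfl | hx0
    · rw [hξ0, hg0]; simp
    · have hxB : x ∈ Set.Ioo (-r) r := (hr₂P hx).2
      have hxU : x ∈ U := (hr₂P hx).1
      have hEq : φ =ᶠ[nhds x] fun y => ξ y + H (ξ y) :=
        Filter.eventually_of_mem (hUo.mem_nhds hxU) (fun y hy => hU y hy)
      have d1 := hφd x (hB x hxB).1.2.2
      have d2 := hΦd x hxB hx0
      have d1' : HasDerivAt (fun y => ξ y + H (ξ y)) (Real.exp (F x)) x :=
        d1.congr_of_eventuallyEq hEq.symm
      have hkey : Real.exp (F x) = (1 + h (ξ x)) * (g x * Real.exp (2 * F x) / ξ x) :=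
        d1'.unique d2
      have hne' : 1 + h (ξ x) ≠ 0 := (hB x hxB).1.2.1
      have hξne' : ξ x ≠ 0 := hξne x hxB hx0
      have hexpne := Real.exp_ne_zero (F x)
      rw [hexp2 x] at hkey
      field_simp at hkey ⊢
      refine mul_left_cancel₀ hexpne ?_
      linear_combination Real.exp (F x) * hkey
end

section
/- Define recursively Q̂₀(x) = g(x) and Q̂ₖ(x) = Q̂ₖ₋₁'(x) − (k−2)f(x)Q̂ₖ₋₁(x), where f, g are real analytic near 0. Then for the function g̃ defined via u = φ(x) = ∫₀ˣ e^{F} (F = ∫₀ˣ f) by g̃(u) = g(x)e^{F(x)}, the k-th derivative satisfies g̃^{(k)}(u) = Q̂ₖ(x)·e^{(1−k)F(x)} for all k ≥ 0. -/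
open Filter Topology Set intervalIntegral
open scoped ContDiff

lemma iteratedDerivWithin_isOpen' {s : Set ℝ} (hs : IsOpen s) {x : ℝ} (hx : x ∈ s)
    (n : ℕ) (f : ℝ → ℝ) : iteratedDerivWithin n f s x = iteratedDeriv n f x := by
  rw [iteratedDerivWithin, iteratedDeriv, iteratedFDerivWithin_of_isOpen n hs hx]

lemma differentiableAt_iteratedDeriv_of_contDiffAt {f : ℝ → ℝ} {y : ℝ} {k : ℕ}
    (h : ContDiffAt ℝ (k + 1) f y) : DifferentiableAt ℝ (iteratedDeriv k f) y := by
  obtain ⟨u, hu, hcd⟩ := h.contDiffOn le_rfl (by simp)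
  obtain ⟨t, hts, ht, hyt⟩ := mem_nhds_iff.mp hu
  have hcd' : ContDiffOn ℝ (k + 1) f t := hcd.mono hts
  have hdiff : DifferentiableOn ℝ (iteratedDerivWithin k f t) t :=
    hcd'.differentiableOn_iteratedDerivWithin (by exact_mod_cast Nat.lt_succ_self k)
      ht.uniqueDiffOn
  have h1 : DifferentiableAt ℝ (iteratedDerivWithin k f t) y :=
    (hdiff y hyt).differentiableAt (ht.mem_nhds hyt)
  refine h1.congr_of_eventuallyEq ?_
  filter_upwards [ht.mem_nhds hyt] with z hz
  exact (iteratedDerivWithin_isOpen' ht hz k f).symm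

/-- with `Q̂₀ = g`, `Q̂ₖ = Q̂ₖ₋₁' - (k-2)·f·Q̂ₖ₋₁`, and `g̃ (φ x) = g x * exp (F x)`
where `φ x = ∫₀ˣ exp F`, `F x = ∫₀ˣ f`, one has
`g̃⁽ᵏ⁾ (φ x) = Q̂ₖ x * exp ((1-k) F x)` for all `k` and `x` near `0`. -/
theorem stmt8 (f g F φ gt : ℝ → ℝ)
    (hf : AnalyticAt ℝ f 0) (hg : AnalyticAt ℝ g 0)
    (hF : ∀ x, F x = ∫ s in (0:ℝ)..x, f s)
    (hφ : ∀ x, φ x = ∫ s in (0:ℝ)..x, Real.exp (F s))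
    (hgt : ∀ᶠ x in nhds 0, gt (φ x) = g x * Real.exp (F x))
    (Q : ℕ → ℝ → ℝ) (hQ0 : ∀ x, Q 0 x = g x)
    (hQk : ∀ (k : ℕ) (x : ℝ), Q (k+1) x =
      deriv (Q k) x - (((k:ℝ)+1) - 2) * f x * Q k x) :
    ∀ k : ℕ, ∀ᶠ x in nhds 0,
      iteratedDeriv k gt (φ x) = Q k x * Real.exp ((1 - (k:ℝ)) * F x) := by
  -- ball on which f is analytic
  obtain ⟨r, hr, hball⟩ := Metric.eventually_nhds_iff_ball.mp hf.eventually_analyticAt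
  set U : Set ℝ := Metric.ball (0:ℝ) r with hU
  have hUopen : IsOpen U := Metric.isOpen_ball
  have h0U : (0:ℝ) ∈ U := Metric.mem_ball_self hr
  have hUnhds : U ∈ 𝓝 (0:ℝ) := hUopen.mem_nhds h0U
  have hfa : ∀ y ∈ U, AnalyticAt ℝ f y := fun y hy => hball y hy
  have hfc : ContinuousOn f U := fun y hy => ((hfa y hy).continuousAt).continuousWithinAt
  have hconv : Convex ℝ U := convex_ball 0 r
  have huIcc : ∀ x ∈ U, Set.uIcc (0:ℝ) x ⊆ U := fun x hx =>
    hconv.ordConnected.uIcc_subset h0U hx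
  -- F has derivative f on U
  have hFd : ∀ x ∈ U, HasDerivAt F (f x) x := by
    intro x hx
    have hi : IntervalIntegrable f MeasureTheory.volume 0 x :=
      (hfc.mono (huIcc x hx)).intervalIntegrable
    have hm : StronglyMeasurableAtFilter f (𝓝 x) :=
      hfc.stronglyMeasurableAtFilter hUopen x hx
    have h := intervalIntegral.integral_hasDerivAt_right hi hm (hfa x hx).continuousAt
    have hFfun : F = fun u => ∫ s in (0:ℝ)..u, f s := funext hF
    rw [hFfun]; exact h
  have hFcont : ContinuousOn F U := fun y hy =>
    ((hFd y hy).differentiableAt.continuousAt).continuousWithinAt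
  have heFc : ContinuousOn (fun s => Real.exp (F s)) U :=
    Real.continuous_exp.comp_continuousOn hFcont
  -- φ has derivative exp (F x) on U
  have hφd : ∀ x ∈ U, HasDerivAt φ (Real.exp (F x)) x := by
    intro x hx
    have hi : IntervalIntegrable (fun s => Real.exp (F s)) MeasureTheory.volume 0 x :=
      (heFc.mono (huIcc x hx)).intervalIntegrable
    have hm : StronglyMeasurableAtFilter (fun s => Real.exp (F s)) (𝓝 x) :=
      heFc.stronglyMeasurableAtFilter hUopen x hx
    have hca : ContinuousAt (fun s => Real.exp (F s)) x :=
      Real.continuous_exp.continuousAt.comp (hFd x hx).differentiableAt.continuousAt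
    have h := intervalIntegral.integral_hasDerivAt_right hi hm hca
    have hφfun : φ = fun u => ∫ s in (0:ℝ)..u, Real.exp (F s) := funext hφ
    rw [hφfun]; exact h
  -- smoothness of F and φ on U
  have hfcd : ContDiffOn ℝ ∞ f U := fun y hy => ((hfa y hy).contDiffAt).contDiffWithinAt
  have hFcd : ContDiffOn ℝ ∞ F U := by
    rw [contDiffOn_infty_iff_deriv_of_isOpen hUopen]
    refine ⟨fun y hy => ((hFd y hy).differentiableAt).differentiableWithinAt, ?_⟩
    exact hfcd.congr fun y hy => (hFd y hy).deriv
  have hφcd : ContDiffOn ℝ ∞ φ U := by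
    rw [contDiffOn_infty_iff_deriv_of_isOpen hUopen]
    refine ⟨fun y hy => ((hφd y hy).differentiableAt).differentiableWithinAt, ?_⟩
    refine ContDiffOn.congr ?_ fun y hy => (hφd y hy).deriv
    exact Real.contDiff_exp.comp_contDiffOn hFcd
  have hF0 : F 0 = 0 := by rw [hF]; simp
  have hφ0 : φ 0 = 0 := by rw [hφ]; simp
  have hφd0 : HasDerivAt φ 1 0 := by
    have := hφd 0 h0U; rwa [hF0, Real.exp_zero] at this
  have hφcd0 : ContDiffAt ℝ ∞ φ 0 := hφcd.contDiffAt hUnhds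
  have hφstrict : HasStrictDerivAt φ 1 0 := by
    have h := hφcd0.hasStrictDerivAt (by norm_num)
    rwa [hφd0.deriv] at h
  -- local inverse ψ of φ near 0
  have hE : HasStrictFDerivAt φ
      ((ContinuousLinearEquiv.unitsEquivAut ℝ (Units.mk0 (1:ℝ) one_ne_zero)) : ℝ →L[ℝ] ℝ) 0 :=
    hφstrict.hasStrictFDerivAt_equiv one_ne_zero
  set ψ : ℝ → ℝ := hE.localInverse φ _ 0 with hψdef
  have hright : ∀ᶠ y in 𝓝 (0:ℝ), φ (ψ y) = y := by
    have := hE.eventually_right_inverse; rwa [hφ0] at this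
  have hψ0 : ψ 0 = 0 := by
    have := hE.localInverse_apply_image; rwa [hφ0] at this
  have hψtendsto : Tendsto ψ (𝓝 0) (𝓝 0) := by
    have h1 := hE.localInverse_continuousAt
    rw [hφ0] at h1
    have h2 : ContinuousAt ψ 0 := h1
    simpa [ContinuousAt, hψ0] using h2
  have hψcd : ContDiffAt ℝ ∞ ψ 0 := by
    have h := hφcd0.to_localInverse (f' := ContinuousLinearEquiv.unitsEquivAut ℝ
        (Units.mk0 (1:ℝ) one_ne_zero)) hE.hasFDerivAt (by norm_num)
    rw [hφ0] at h
    exact h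
  -- gt agrees near 0 with a smooth function
  have hgtrep : gt =ᶠ[𝓝 0] fun y => g (ψ y) * Real.exp (F (ψ y)) := by
    filter_upwards [hright, hψtendsto.eventually hgt] with y h1 h2
    conv_lhs => rw [← h1]
    exact h2
  have hgtcd : ContDiffAt ℝ ∞ gt 0 := by
    have hg0 : ContDiffAt ℝ ∞ g (ψ 0) := by rw [hψ0]; exact hg.contDiffAt
    have hgC : ContDiffAt ℝ ∞ (fun y => g (ψ y)) 0 := hg0.comp 0 hψcd
    have hF0' : ContDiffAt ℝ ∞ F (ψ 0) := by rw [hψ0]; exact hFcd.contDiffAt hUnhds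
    have hFC : ContDiffAt ℝ ∞ (fun y => F (ψ y)) 0 := hF0'.comp 0 hψcd
    have heC : ContDiffAt ℝ ∞ (fun y => Real.exp (F (ψ y))) 0 :=
      (Real.contDiff_exp.contDiffAt).comp 0 hFC
    exact (hgC.mul heC).congr_of_eventuallyEq hgtrep
  have hgtev : ∀ n : ℕ, ∀ᶠ y in 𝓝 (0:ℝ), ContDiffAt ℝ n gt y := by
    intro n
    exact (hgtcd.of_le (by exact_mod_cast le_top)).eventually (by simp)
  have hφtendsto : Tendsto φ (𝓝 0) (𝓝 0) := by
    have h := hφd0.differentiableAt.continuousAt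
    simpa [ContinuousAt, hφ0] using h
  intro k
  induction k with
  | zero =>
    filter_upwards [hgt] with x hx
    simpa [hQ0] using hx
  | succ k IH =>
    have hQrep : (Q k) =ᶠ[𝓝 0]
        fun x => iteratedDeriv k gt (φ x) * Real.exp (((k:ℝ) - 1) * F x) := by
      filter_upwards [IH] with x hx
      rw [hx, mul_assoc, ← Real.exp_add,
        show (1 - (k:ℝ)) * F x + ((k:ℝ) - 1) * F x = 0 by ring, Real.exp_zero, mul_one]
    have hQd := hQrep.deriv
    have hcdk : ∀ᶠ x in 𝓝 (0:ℝ), ContDiffAt ℝ (k + 1) gt (φ x) :=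
      hφtendsto.eventually (hgtev (k + 1))
    filter_upwards [hUnhds, IH, hQd, hcdk] with x hxU hIH hQdx hcd
    have hFdx := hFd x hxU
    have hφdx := hφd x hxU
    have hdiff : DifferentiableAt ℝ (iteratedDeriv k gt) (φ x) :=
      differentiableAt_iteratedDeriv_of_contDiffAt (by exact_mod_cast hcd)
    have hc : HasDerivAt (iteratedDeriv k gt) (iteratedDeriv (k + 1) gt (φ x)) (φ x) := by
      rw [iteratedDeriv_succ]; exact hdiff.hasDerivAt
    have hL : HasDerivAt (fun y => iteratedDeriv k gt (φ y))
        (iteratedDeriv (k + 1) gt (φ x) * Real.exp (F x)) x := by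
      exact hc.comp x hφdx
    have hexpd : HasDerivAt (fun y => Real.exp (((k:ℝ) - 1) * F y))
        (Real.exp (((k:ℝ) - 1) * F x) * (((k:ℝ) - 1) * f x)) x :=
      (hFdx.const_mul ((k:ℝ) - 1)).exp
    have hrepd : deriv (fun y => iteratedDeriv k gt (φ y) * Real.exp (((k:ℝ) - 1) * F y)) x
        = iteratedDeriv (k + 1) gt (φ x) * Real.exp (F x) * Real.exp (((k:ℝ) - 1) * F x)
          + iteratedDeriv k gt (φ x) * (Real.exp (((k:ℝ) - 1) * F x) * (((k:ℝ) - 1) * f x)) :=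
      (hL.mul hexpd).deriv
    have hQkx : Q k x = iteratedDeriv k gt (φ x) * Real.exp (((k:ℝ) - 1) * F x) := by
      rw [hIH, mul_assoc, ← Real.exp_add,
        show (1 - (k:ℝ)) * F x + ((k:ℝ) - 1) * F x = 0 by ring, Real.exp_zero, mul_one]
    rw [hQk k x, hQdx, hrepd, hQkx]
    push_cast
    have hone : Real.exp (F x) * Real.exp (((k:ℝ) - 1) * F x)
        * Real.exp ((1 - ((k:ℝ) + 1)) * F x) = 1 := by
      rw [← Real.exp_add, ← Real.exp_add,
        show F x + ((k:ℝ) - 1) * F x + (1 - ((k:ℝ) + 1)) * F x = 0 by ring, Real.exp_zero]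
    linear_combination (-(iteratedDeriv (k + 1) gt (φ x))) * hone
end

section
/- Let f = N_f/D_f and g = N_g/D_g be rational functions with D_f(0)=D_g(0)=1, and define Q₀(x) = N_g(x) and Qₖ(x) = Qₖ₋₁·D_g·((1−k)D_f' + (2−k)N_f) − k·Qₖ₋₁·D_g'·D_f + Qₖ₋₁'·D_g·D_f. Then each Qₖ is a polynomial, and Q̂ₖ(x) := Qₖ(x)/(D_f(x)^k D_g(x)^{k+1}) satisfies the recursion Q̂ₖ = Q̂ₖ₋₁' − (k−2)(N_f/D_f)·Q̂ₖ₋₁ with Q̂₀ = N_g/D_g. -/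
/-- the RCA recursion: with `Q₀ = N_g` and
`Qₖ = Qₖ₋₁·D_g·((1-k)D_f' + (2-k)N_f) - k·Qₖ₋₁·D_g'·D_f + Qₖ₋₁'·D_g·D_f`, each `Qₖ` is a
polynomial and `Q̂ₖ x = Qₖ x / (D_f x ^ k * D_g x ^ (k+1))` satisfies the ReCA recursion
`Q̂ₖ = Q̂ₖ₋₁' - (k-2)·(N_f/D_f)·Q̂ₖ₋₁`, `Q̂₀ = N_g/D_g`, where `D_f, D_g` are nonzero. -/
theorem stmt10 (Nf Df Ng Dg : Polynomial ℝ)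
    (hDf : Df.eval 0 = 1) (hDg : Dg.eval 0 = 1)
    (Q : ℕ → Polynomial ℝ) (hQ0 : Q 0 = Ng)
    (hQk : ∀ k : ℕ, Q (k+1) =
      Q k * Dg * (Polynomial.C (1 - ((k:ℝ)+1)) * Df.derivative
                    + Polynomial.C (2 - ((k:ℝ)+1)) * Nf)
      - Polynomial.C ((k:ℝ)+1) * Q k * Dg.derivative * Df
      + (Q k).derivative * Dg * Df)
    (Qhat : ℕ → ℝ → ℝ)
    (hQhat : ∀ (k : ℕ) (x : ℝ),
      Qhat k x = (Q k).eval x / ((Df.eval x) ^ k * (Dg.eval x) ^ (k+1))) :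
    (∀ x, Qhat 0 x = Ng.eval x / Dg.eval x) ∧
    (∀ (k : ℕ) (x : ℝ), Df.eval x ≠ 0 → Dg.eval x ≠ 0 →
      Qhat (k+1) x = deriv (Qhat k) x
        - (((k:ℝ)+1) - 2) * (Nf.eval x / Df.eval x) * Qhat k x) := by
  constructor
  · intro x
    simp [hQhat 0 x, hQ0]
  · intro k x hf hg
    set a := Df.eval x with ha
    set a' := Df.derivative.eval x with ha'
    set b := Dg.eval x with hb
    set b' := Dg.derivative.eval x with hb'
    set q := (Q k).eval x with hq
    set q' := (Q k).derivative.eval x with hq'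
    have hQf : Qhat k = fun y => (Q k).eval y / ((Df.eval y) ^ k * (Dg.eval y) ^ (k+1)) :=
      funext (hQhat k)
    have hden : a ^ k * b ^ (k+1) ≠ 0 := by positivity
    have hder : deriv (Qhat k) x =
        (q' * a * b - (k:ℝ) * q * a' * b - ((k:ℝ)+1) * q * a * b')
          / (a ^ (k+1) * b ^ (k+2)) := by
      rw [hQf, (show HasDerivAt (fun y => (Q k).eval y / ((Df.eval y) ^ k * (Dg.eval y) ^ (k+1))) _ x from
        ((Q k).hasDerivAt x).div
        (((Df.hasDerivAt x).pow k).mul ((Dg.hasDerivAt x).pow (k+1))) hden).deriv]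
      simp only [Pi.pow_apply, ← ha, ← hb, ← hq, ← hq', ← ha', ← hb']
      cases k with
      | zero => norm_num; field_simp
      | succ m =>
        simp only [Nat.add_sub_cancel]
        push_cast
        field_simp
        ring
    have hQk1 : (Q (k+1)).eval x =
        q * b * ((1 - ((k:ℝ)+1)) * a' + (2 - ((k:ℝ)+1)) * Nf.eval x)
        - ((k:ℝ)+1) * q * b' * a + q' * b * a := by
      rw [hQk k]
      simp [Polynomial.eval_mul, Polynomial.eval_add, Polynomial.eval_sub]
      rfl
    rw [hQhat (k+1) x, hQk1, hder, hQhat k x]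
    rw [← ha, ← hb, ← hq]
    field_simp
    ring
end

section
/- Let f = N_f/D_f, g = N_g/D_g be rational with D_f(0)=D_g(0)=1, F(x)=∫₀ˣ f, u=φ(x)=∫₀ˣ e^F, and g̃(u) = g(x)e^{F(x)}. With Qₖ as in the Rational C-Algorithm recursion (Q₀ = N_g, Qₖ = Qₖ₋₁·D_g·((1−k)D_f' + (2−k)N_f) − k·Qₖ₋₁·D_g'·D_f + Qₖ₋₁'·D_g·D_f), one has g̃^{(k)}(u) = Qₖ(x)·e^{(1−k)F(x)} / (D_f(x)^k D_g(x)^{k+1}) for all k ≥ 0 and x near 0. -/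
open Filter intervalIntegral MeasureTheory
open scoped Topology

lemma rca_key (k : ℕ) (a b a' b' nf q q' E A : ℝ) (ha : a ≠ 0) (hb : b ≠ 0)
    (hE : E ≠ 0) :
    ((q' * A + q * (A * ((1 - (k:ℝ)) * (nf / a)))) * (a ^ k * b ^ (k+1))
        - q * A * (((k:ℝ) * a ^ (k-1) * a') * b ^ (k+1)
            + a ^ k * (((k:ℝ)+1) * b ^ k * b')))
      / (a ^ k * b ^ (k+1)) ^ 2 * E⁻¹
    = (q * b * ((1 - ((k:ℝ)+1)) * a' + (2 - ((k:ℝ)+1)) * nf)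
        - ((k:ℝ)+1) * q * b' * a + q' * b * a)
        * (A / E) / (a ^ (k+1) * b ^ (k+2)) := by
  rcases k with _ | m
  · push_cast
    field_simp
    ring
  · push_cast
    field_simp
    ring

/-- for rational `f = N_f/D_f`, `g = N_g/D_g` with `D_f 0 = D_g 0 = 1`, with `Qₖ`
as in the RCA recursion and `g̃ (φ x) = g x * exp (F x)`, one has
`g̃⁽ᵏ⁾ (φ x) = Qₖ x * exp ((1-k) F x) / (D_f x ^ k * D_g x ^ (k+1))` for all `k ≥ 0`, `x` near 0. -/
theorem stmt11 (Nf Df Ng Dg : Polynomial ℝ)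
    (hDf : Df.eval 0 = 1) (hDg : Dg.eval 0 = 1)
    (f g F φ gt : ℝ → ℝ)
    (hfdef : ∀ x, Df.eval x ≠ 0 → f x = Nf.eval x / Df.eval x)
    (hgdef : ∀ x, Dg.eval x ≠ 0 → g x = Ng.eval x / Dg.eval x)
    (hF : ∀ x, F x = ∫ s in (0:ℝ)..x, f s)
    (hφ : ∀ x, φ x = ∫ s in (0:ℝ)..x, Real.exp (F s))
    (hgt : ∀ᶠ x in nhds 0, gt (φ x) = g x * Real.exp (F x))
    (Q : ℕ → Polynomial ℝ) (hQ0 : Q 0 = Ng)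
    (hQk : ∀ k : ℕ, Q (k+1) =
      Q k * Dg * (Polynomial.C (1 - ((k:ℝ)+1)) * Df.derivative
                    + Polynomial.C (2 - ((k:ℝ)+1)) * Nf)
      - Polynomial.C ((k:ℝ)+1) * Q k * Dg.derivative * Df
      + (Q k).derivative * Dg * Df) :
    ∀ k : ℕ, ∀ᶠ x in nhds 0,
      iteratedDeriv k gt (φ x) =
        (Q k).eval x * Real.exp ((1 - (k:ℝ)) * F x)
          / ((Df.eval x) ^ k * (Dg.eval x) ^ (k+1)) := by
  -- a ball around 0 on which both denominators are nonzero
  have hDfc : Continuous fun x : ℝ => Df.eval x := Df.continuous_aeval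
  have hDgc : Continuous fun x : ℝ => Dg.eval x := Dg.continuous_aeval
  have hne : {x : ℝ | Df.eval x ≠ 0 ∧ Dg.eval x ≠ 0} ∈ 𝓝 (0:ℝ) := by
    have h1 : ∀ᶠ x in 𝓝 (0:ℝ), Df.eval x ≠ 0 :=
      hDfc.continuousAt.eventually_ne (by rw [hDf]; exact one_ne_zero)
    have h2 : ∀ᶠ x in 𝓝 (0:ℝ), Dg.eval x ≠ 0 :=
      hDgc.continuousAt.eventually_ne (by rw [hDg]; exact one_ne_zero)
    exact (h1.and h2)
  obtain ⟨ε, hε, hball⟩ := Metric.mem_nhds_iff.mp hne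
  set sB : Set ℝ := Metric.ball (0:ℝ) ε with hsB
  have h0s : (0:ℝ) ∈ sB := Metric.mem_ball_self hε
  have hsub : ∀ x ∈ sB, Df.eval x ≠ 0 ∧ Dg.eval x ≠ 0 := fun x hx => hball hx
  have hsopen : IsOpen sB := Metric.isOpen_ball
  have hsmem : ∀ᶠ x in 𝓝 (0:ℝ), x ∈ sB :=
    eventually_of_mem (hsopen.mem_nhds h0s) fun y hy => hy
  -- f is continuous on sB
  have hfc : ContinuousOn f sB := by
    refine ContinuousOn.congr (Nf.continuousOn_aeval.div Df.continuousOn_aeval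
      fun x hx => (hsub x hx).1) fun x hx => hfdef x (hsub x hx).1
  have huIcc : ∀ x ∈ sB, Set.uIcc (0:ℝ) x ⊆ sB := fun x hx =>
    ((convex_ball (0:ℝ) ε).ordConnected).uIcc_subset h0s hx
  -- F has derivative f on sB
  have hFfun : F = fun t => ∫ s in (0:ℝ)..t, f s := funext hF
  have hFd : ∀ x ∈ sB, HasDerivAt F (f x) x := by
    intro x hx
    rw [hFfun]
    exact integral_hasDerivAt_right ((hfc.mono (huIcc x hx)).intervalIntegrable)
      (hfc.stronglyMeasurableAtFilter hsopen x hx)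
      (hfc.continuousAt (hsopen.mem_nhds hx))
  have hFcont : ContinuousOn F sB := fun x hx =>
    ((hFd x hx).continuousAt).continuousWithinAt
  have hF0 : F 0 = 0 := by rw [hF]; exact intervalIntegral.integral_same
  -- φ has derivative exp (F x) on sB
  have hexpc : ContinuousOn (fun t => Real.exp (F t)) sB :=
    Real.continuous_exp.comp_continuousOn hFcont
  have hφfun : φ = fun t => ∫ s in (0:ℝ)..t, Real.exp (F s) := funext hφ
  have hφd : ∀ x ∈ sB, HasDerivAt φ (Real.exp (F x)) x := by
    intro x hx
    rw [hφfun]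
    exact integral_hasDerivAt_right ((hexpc.mono (huIcc x hx)).intervalIntegrable)
      (hexpc.stronglyMeasurableAtFilter hsopen x hx)
      (hexpc.continuousAt (hsopen.mem_nhds hx))
  have hφ0 : φ 0 = 0 := by rw [hφ]; exact intervalIntegral.integral_same
  -- strict derivative of φ at 0, equal to 1
  have hφstrict : HasStrictDerivAt φ 1 0 := by
    have h := integral_hasStrictDerivAt_right
      ((hexpc.mono (huIcc 0 h0s)).intervalIntegrable)
      (hexpc.stronglyMeasurableAtFilter hsopen 0 h0s)
      (hexpc.continuousAt (hsopen.mem_nhds h0s))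
    rw [hφfun]
    simpa [hF0] using h
  -- local inverse of φ near 0
  have hEq := hφstrict.hasStrictFDerivAt_equiv one_ne_zero
  set ψ := hEq.localInverse _ _ _ with hψdef
  have hleft : ∀ᶠ x in 𝓝 (0:ℝ), ψ (φ x) = x := hEq.eventually_left_inverse
  have hright : ∀ᶠ u in 𝓝 (φ 0), φ (ψ u) = u := hEq.eventually_right_inverse
  have hψtendsto : Tendsto ψ (𝓝 (φ 0)) (𝓝 0) := hEq.localInverse_tendsto
  have hψconts : ∀ᶠ u in 𝓝 (φ 0), ContinuousAt ψ u := by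
    have hmem : (hEq.toOpenPartialHomeomorph φ).target ∈ 𝓝 (φ 0) :=
      (hEq.toOpenPartialHomeomorph φ).open_target.mem_nhds
        hEq.image_mem_toOpenPartialHomeomorph_target
    filter_upwards [hmem] with u hu
    rw [hψdef, hEq.localInverse_def]
    exact (hEq.toOpenPartialHomeomorph φ).symm.continuousAt
      (by rwa [OpenPartialHomeomorph.symm_source])
  intro k
  induction k with
  | zero =>
    filter_upwards [hgt, hsmem] with x h1 h2
    rw [iteratedDeriv_zero, h1, hgdef x (hsub x h2).2, hQ0]
    push_cast
    norm_num
    ring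
  | succ k ih =>
    set R : ℝ → ℝ := fun t =>
      (Q k).eval t * Real.exp ((1 - (k:ℝ)) * F t)
        / (Df.eval t ^ k * Dg.eval t ^ (k+1)) with hRdef
    obtain ⟨V, hV, hVopen, hV0⟩ := eventually_nhds_iff.mp (ih.and hsmem)
    have hgtψ : ∀ᶠ u in 𝓝 (φ 0), iteratedDeriv k gt u = R (ψ u) := by
      filter_upwards [hright,
        hψtendsto.eventually (eventually_of_mem (hVopen.mem_nhds hV0) fun y hy => hy)]
        with u h1 h2
      have h3 := (hV _ h2).1
      rw [h1] at h3
      exact h3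
    obtain ⟨O, hO, hOopen, hO0⟩ :=
      eventually_nhds_iff.mp (hgtψ.and (hright.and hψconts))
    have hφcont : ContinuousAt φ 0 := (hφd 0 h0s).continuousAt
    have hφO : ∀ᶠ x in 𝓝 (0:ℝ), φ x ∈ O :=
      hφcont.eventually_mem (hOopen.mem_nhds hO0)
    filter_upwards [hφO, hleft, hsmem] with x hxO hψφ hxs
    have hxa : Df.eval x ≠ 0 := (hsub x hxs).1
    have hxb : Dg.eval x ≠ 0 := (hsub x hxs).2
    -- derivative of R at x
    have hnum : HasDerivAt (fun t => (Q k).eval t * Real.exp ((1 - (k:ℝ)) * F t))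
        ((Q k).derivative.eval x * Real.exp ((1 - (k:ℝ)) * F x)
          + (Q k).eval x * (Real.exp ((1 - (k:ℝ)) * F x) * ((1 - (k:ℝ)) * f x))) x :=
      (Q k).hasDerivAt x |>.mul (((hFd x hxs).const_mul ((1:ℝ) - (k:ℝ))).exp)
    have hden : HasDerivAt (fun t => Df.eval t ^ k * Dg.eval t ^ (k+1))
        (((k:ℝ) * Df.eval x ^ (k-1) * Df.derivative.eval x) * Dg.eval x ^ (k+1)
          + Df.eval x ^ k * (((k:ℝ)+1) * Dg.eval x ^ k * Dg.derivative.eval x)) x := by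
      have h1 := (Df.hasDerivAt x).fun_pow k
      have h2 := (Dg.hasDerivAt x).fun_pow (k+1)
      refine (h1.fun_mul h2).congr_deriv ?_
      push_cast [Nat.add_sub_cancel]
      ring
    have hdenne : Df.eval x ^ k * Dg.eval x ^ (k+1) ≠ 0 :=
      mul_ne_zero (pow_ne_zero _ hxa) (pow_ne_zero _ hxb)
    have hRd : HasDerivAt R
        ((((Q k).derivative.eval x * Real.exp ((1 - (k:ℝ)) * F x)
            + (Q k).eval x * (Real.exp ((1 - (k:ℝ)) * F x)
                * ((1 - (k:ℝ)) * (Nf.eval x / Df.eval x))))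
            * (Df.eval x ^ k * Dg.eval x ^ (k+1))
          - (Q k).eval x * Real.exp ((1 - (k:ℝ)) * F x)
            * (((k:ℝ) * Df.eval x ^ (k-1) * Df.derivative.eval x) * Dg.eval x ^ (k+1)
              + Df.eval x ^ k * (((k:ℝ)+1) * Dg.eval x ^ k * Dg.derivative.eval x)))
          / (Df.eval x ^ k * Dg.eval x ^ (k+1)) ^ 2) x := by
      have h := hnum.div hden hdenne
      rw [hfdef x hxa] at h
      exact h
    -- derivative of ψ at φ x
    have hψd : HasDerivAt ψ (Real.exp (F x))⁻¹ (φ x) := by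
      refine HasDerivAt.of_local_left_inverse (f := φ) ((hO _ hxO).2.2) ?_ (Real.exp_ne_zero _) ?_
      · rw [hψφ]; exact hφd x hxs
      · exact eventually_of_mem (hOopen.mem_nhds hxO) fun u hu => (hO u hu).2.1
    have hRψ : HasDerivAt (R ∘ ψ)
        ((((Q k).derivative.eval x * Real.exp ((1 - (k:ℝ)) * F x)
            + (Q k).eval x * (Real.exp ((1 - (k:ℝ)) * F x)
                * ((1 - (k:ℝ)) * (Nf.eval x / Df.eval x))))
            * (Df.eval x ^ k * Dg.eval x ^ (k+1))
          - (Q k).eval x * Real.exp ((1 - (k:ℝ)) * F x)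
            * (((k:ℝ) * Df.eval x ^ (k-1) * Df.derivative.eval x) * Dg.eval x ^ (k+1)
              + Df.eval x ^ k * (((k:ℝ)+1) * Dg.eval x ^ k * Dg.derivative.eval x)))
          / (Df.eval x ^ k * Dg.eval x ^ (k+1)) ^ 2 * (Real.exp (F x))⁻¹) (φ x) := by
      refine HasDerivAt.comp (φ x) ?_ hψd
      rw [hψφ]
      exact hRd
    have heq : iteratedDeriv k gt =ᶠ[𝓝 (φ x)] (R ∘ ψ) :=
      eventually_of_mem (hOopen.mem_nhds hxO) fun u hu => (hO u hu).1
    have hgt' := hRψ.congr_of_eventuallyEq heq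
    rw [iteratedDeriv_succ, hgt'.deriv, hQk k]
    simp only [Polynomial.eval_add, Polynomial.eval_sub, Polynomial.eval_mul,
      Polynomial.eval_C]
    have hsplit : Real.exp ((1 - ((k:ℝ)+1)) * F x)
        = Real.exp ((1 - (k:ℝ)) * F x) / Real.exp (F x) := by
      rw [← Real.exp_sub]
      ring_nf
    push_cast
    rw [hsplit]
    exact rca_key k (Df.eval x) (Dg.eval x) (Df.derivative.eval x) (Dg.derivative.eval x)
      (Nf.eval x) ((Q k).eval x) ((Q k).derivative.eval x) (Real.exp (F x))
      (Real.exp ((1 - (k:ℝ)) * F x)) hxa hxb (Real.exp_ne_zero _)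
end

section
/- The function h(ξ) = √2·√((−4+ξ²+2√(4+2ξ²))/ξ²)·ξ·(ξ²+2√(4+2ξ²)+2) / ((2+ξ²)(√(4+2ξ²)+6)), extended by h(0)=0, is an odd real analytic function in a neighborhood of 0. -/
open Filter Topology

lemma my_analyticAt_sqrt {a : ℝ} (ha : 0 < a) : AnalyticAt ℝ Real.sqrt a := by
  have h1 : AnalyticAt ℂ (fun z : ℂ => z ^ (1/2 : ℂ)) (a : ℂ) := by
    apply AnalyticAt.cpow analyticAt_id analyticAt_const
    simp [Complex.mem_slitPlane_iff, ha]
  have h2 : AnalyticAt ℝ (fun x : ℝ => ((x:ℂ) ^ (1/2:ℂ)).re) a :=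
    (Complex.reCLM.analyticAt _).comp
      ((h1.restrictScalars).comp (Complex.ofRealCLM.analyticAt _))
  apply h2.congr
  filter_upwards [eventually_gt_nhds ha] with x hx
  have : ((1:ℂ)/2) = ((1/2 : ℝ) : ℂ) := by norm_num
  rw [this, ← Complex.ofReal_cpow hx.le, Complex.ofReal_re]
  exact (Real.sqrt_eq_rpow x).symm

lemma key_ratio (ξ : ℝ) (hξ : ξ ≠ 0) :
    (-4 + ξ^2 + 2 * Real.sqrt (4 + 2*ξ^2)) / ξ^2
      = (Real.sqrt (4 + 2*ξ^2) + 6) / (Real.sqrt (4 + 2*ξ^2) + 2) := by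
  set s := Real.sqrt (4 + 2*ξ^2) with hs
  have hsnn : 0 ≤ s := Real.sqrt_nonneg _
  have hs2 : s ^ 2 = 4 + 2*ξ^2 := Real.sq_sqrt (by positivity)
  have h2 : s + 2 ≠ 0 := by positivity
  have hξ2 : ξ^2 ≠ 0 := pow_ne_zero _ hξ
  field_simp
  linear_combination 2 * hs2

/-- the Urabe function defined for `ξ ≠ 0` by
`h ξ = √2·√((-4+ξ²+2√(4+2ξ²))/ξ²)·ξ·(ξ²+2√(4+2ξ²)+2) / ((2+ξ²)(√(4+2ξ²)+6))` and `h 0 = 0`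
is odd and real analytic in a neighborhood of `0`. -/
theorem stmt16 (h : ℝ → ℝ) (h0 : h 0 = 0)
    (hdef : ∀ ξ : ℝ, ξ ≠ 0 → h ξ =
      (Real.sqrt 2 * Real.sqrt ((-4 + ξ^2 + 2 * Real.sqrt (4 + 2*ξ^2)) / ξ^2)
        * ξ * (ξ^2 + 2 * Real.sqrt (4 + 2*ξ^2) + 2))
      / ((2 + ξ^2) * (Real.sqrt (4 + 2*ξ^2) + 6))) :
    AnalyticAt ℝ h 0 ∧ ∀ ξ, h (-ξ) = - h ξ := by
  constructor
  · -- analyticity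
    set F : ℝ → ℝ := fun ξ =>
      (Real.sqrt 2 * Real.sqrt ((Real.sqrt (4 + 2*ξ^2) + 6) / (Real.sqrt (4 + 2*ξ^2) + 2))
        * ξ * (ξ^2 + 2 * Real.sqrt (4 + 2*ξ^2) + 2))
      / ((2 + ξ^2) * (Real.sqrt (4 + 2*ξ^2) + 6)) with hF
    have hinner : AnalyticAt ℝ (fun ξ : ℝ => 4 + 2*ξ^2) 0 :=
      analyticAt_const.add (analyticAt_const.mul (analyticAt_id.pow 2))
    have hs4 : Real.sqrt (4:ℝ) = 2 := by
      rw [show (4:ℝ) = 2^2 by norm_num, Real.sqrt_sq (by norm_num : (0:ℝ) ≤ 2)]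
    have hsA : AnalyticAt ℝ (fun ξ : ℝ => Real.sqrt (4 + 2*ξ^2)) 0 := by
      have := AnalyticAt.comp_of_eq (g := Real.sqrt) (f := fun ξ : ℝ => 4 + 2*ξ^2)
        (y := (4:ℝ)) (my_analyticAt_sqrt (by norm_num)) hinner (by norm_num)
      simpa [Function.comp_def] using this
    have hratio : AnalyticAt ℝ
        (fun ξ : ℝ => (Real.sqrt (4 + 2*ξ^2) + 6) / (Real.sqrt (4 + 2*ξ^2) + 2)) 0 := by
      apply (hsA.add analyticAt_const).div (hsA.add analyticAt_const)
      norm_num [hs4]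
    have hsqrt_ratio : AnalyticAt ℝ
        (fun ξ : ℝ => Real.sqrt ((Real.sqrt (4 + 2*ξ^2) + 6) / (Real.sqrt (4 + 2*ξ^2) + 2))) 0 := by
      have := AnalyticAt.comp_of_eq (g := Real.sqrt)
        (f := fun ξ : ℝ => (Real.sqrt (4 + 2*ξ^2) + 6) / (Real.sqrt (4 + 2*ξ^2) + 2))
        (y := (2:ℝ)) (my_analyticAt_sqrt (by norm_num)) hratio (by norm_num [hs4])
      simpa [Function.comp_def] using this
    have hFA : AnalyticAt ℝ F 0 := by
      apply AnalyticAt.div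
      · exact ((analyticAt_const.mul hsqrt_ratio).mul analyticAt_id).mul
          (((analyticAt_id.pow 2).add (analyticAt_const.mul hsA)).add analyticAt_const)
      · exact ((analyticAt_const.add (analyticAt_id.pow 2)).mul (hsA.add analyticAt_const))
      · norm_num [hs4]
    apply hFA.congr
    apply Filter.Eventually.of_forall
    intro ξ
    by_cases hξ : ξ = 0
    · subst hξ; simp [hF, h0]
    · rw [hF, hdef ξ hξ, key_ratio ξ hξ]
  · -- oddness
    intro ξ
    by_cases hξ : ξ = 0
    · subst hξ; simp [h0]
    · rw [hdef ξ hξ, hdef (-ξ) (neg_ne_zero.mpr hξ)]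
      simp only [neg_sq]
      ring
end

section
/- With P̂ₖ as in the Reduced C-Algorithm applied to a polynomial (truncated) odd function h, the value P̂ₖ(0) depends only on the coefficients of h of degree < k; equivalently, replacing h by its truncation modulo ξ^{M−k+1} does not change P̂ⱼ(0) for any j ≤ M. -/
open PowerSeries

/-- for the ReCA recursion `P̂₀ = ξ`, `P̂ₖ = P̂ₖ₋₁'·(1+h) - (2k-1)·P̂ₖ₋₁·h'` on
formal power series, the constant term `P̂ₖ(0)` depends only on the coefficients of `h` of
degree `< k`; consequently, truncating `h` (keeping all coefficients of degree `≤ M`) does not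
change `P̂ⱼ(0)` for any `j ≤ M`. -/
theorem stmt17 (h₁ h₂ : PowerSeries ℝ)
    (hc₁ : PowerSeries.constantCoeff h₁ = 0) (hc₂ : PowerSeries.constantCoeff h₂ = 0)
    (P₁ P₂ : ℕ → PowerSeries ℝ)
    (hP₁0 : P₁ 0 = PowerSeries.X) (hP₂0 : P₂ 0 = PowerSeries.X)
    (hP₁k : ∀ k : ℕ, P₁ (k+1) =
      (PowerSeries.derivative ℝ (P₁ k)) * (1 + h₁)
        - PowerSeries.C (2 * ((k:ℝ)+1) - 1) * P₁ k * PowerSeries.derivative ℝ h₁)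
    (hP₂k : ∀ k : ℕ, P₂ (k+1) =
      (PowerSeries.derivative ℝ (P₂ k)) * (1 + h₂)
        - PowerSeries.C (2 * ((k:ℝ)+1) - 1) * P₂ k * PowerSeries.derivative ℝ h₂) :
    (∀ k : ℕ, (∀ i < k, PowerSeries.coeff i h₁ = PowerSeries.coeff i h₂) →
      PowerSeries.constantCoeff (P₁ k) = PowerSeries.constantCoeff (P₂ k)) ∧
    (∀ M : ℕ, (∀ i ≤ M, PowerSeries.coeff i h₁ = PowerSeries.coeff i h₂) →
      ∀ j ≤ M, PowerSeries.constantCoeff (P₁ j) = PowerSeries.constantCoeff (P₂ j)) := by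
  have key : ∀ k : ℕ, ∀ j : ℕ,
      (∀ i, i < j + k → PowerSeries.coeff i h₁ = PowerSeries.coeff i h₂) →
      PowerSeries.coeff j (P₁ k) = PowerSeries.coeff j (P₂ k) := by
    intro k
    induction k with
    | zero => intro j _; rw [hP₁0, hP₂0]
    | succ k ih =>
      intro j H
      rw [hP₁k, hP₂k, map_sub (PowerSeries.coeff j), map_sub (PowerSeries.coeff j)]
      have e1 : PowerSeries.coeff j ((PowerSeries.derivative ℝ (P₁ k)) * (1 + h₁))
          = PowerSeries.coeff j ((PowerSeries.derivative ℝ (P₂ k)) * (1 + h₂)) := by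
        rw [PowerSeries.coeff_mul, PowerSeries.coeff_mul]
        apply Finset.sum_congr rfl
        intro p hp
        rw [Finset.HasAntidiagonal.mem_antidiagonal] at hp
        have h1 : PowerSeries.coeff p.1 (PowerSeries.derivative ℝ (P₁ k))
            = PowerSeries.coeff p.1 (PowerSeries.derivative ℝ (P₂ k)) := by
          rw [PowerSeries.coeff_derivative, PowerSeries.coeff_derivative,
            ih (p.1 + 1) (fun i hi => H i (by omega))]
        have h2 : PowerSeries.coeff p.2 (1 + h₁) = PowerSeries.coeff p.2 (1 + h₂) := by
          rw [map_add, map_add, H p.2 (by omega)]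
        rw [h1, h2]
      have e2 : PowerSeries.coeff j
            (PowerSeries.C (2 * ((k:ℝ)+1) - 1) * P₁ k * PowerSeries.derivative ℝ h₁)
          = PowerSeries.coeff j
            (PowerSeries.C (2 * ((k:ℝ)+1) - 1) * P₂ k * PowerSeries.derivative ℝ h₂) := by
        rw [mul_assoc, mul_assoc, PowerSeries.coeff_C_mul, PowerSeries.coeff_C_mul]
        congr 1
        rw [PowerSeries.coeff_mul, PowerSeries.coeff_mul]
        apply Finset.sum_congr rfl
        intro p hp
        rw [Finset.HasAntidiagonal.mem_antidiagonal] at hp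
        by_cases hl : p.2 + 1 < j + (k + 1)
        · have h1 : PowerSeries.coeff p.1 (P₁ k) = PowerSeries.coeff p.1 (P₂ k) :=
            ih p.1 (fun i hi => H i (by omega))
          have h2 : PowerSeries.coeff p.2 (PowerSeries.derivative ℝ h₁)
              = PowerSeries.coeff p.2 (PowerSeries.derivative ℝ h₂) := by
            rw [PowerSeries.coeff_derivative, PowerSeries.coeff_derivative, H (p.2 + 1) hl]
          rw [h1, h2]
        · have hk0 : k = 0 ∧ p.1 = 0 := by omega
          obtain ⟨hk0, hp1⟩ := hk0
          subst hk0
          rw [hp1, hP₁0, hP₂0]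
          simp
      rw [e1, e2]
  constructor
  · intro k hk
    have := key k 0 (fun i hi => hk i (by omega))
    simpa using this
  · intro M hM j hj
    have := key j 0 (fun i hi => hM i (by omega))
    simpa using this
end
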